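/- arXiv:2405.18793 — 2 statements merged into one kernel-verified Lean document; each statement's English description precedes it below -/
import Mathlib

section
/- Let $p$ be a Markov transition kernel on $\mathcal{S}$, uniformly ergodic with constants $C > 0$, $\alpha \in (0,1)$ (so that the distribution from any initial state converges geometrically to the invariant distribution at rate $C\alpha^t$). Let $\mu^{(0)}_1, \mu^{(0)}_2$ be two initial distributions and let $\mu^{(i)}_1, \mu^{(i)}_2$ be the corresponding distributions at time $i$. Then $\sum_{i=0}^{\infty} \|\mu^{(i)}_1 - \mu^{(i)}_2\|_{TV} \leq \frac{m^\star}{1-\alpha}\,\|\mu^{(0)}_1 - \mu^{(0)}_2\|_{TV}$, where $m^\star = \lceil \log_{1/\alpha}(C) \rceil + 1$. -/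
open MeasureTheory

/-- Total variation norm of the difference of two measures. -/
noncomputable def tvDist {S : Type*} [MeasurableSpace S] (μ ν : Measure S) : ℝ :=
  sSup {x : ℝ | ∃ (n : ℕ) (B : Fin n → Set S), (∀ i, MeasurableSet (B i)) ∧
    (Pairwise fun i j => Disjoint (B i) (B j)) ∧ (⋃ i, B i) = Set.univ ∧
    x = ∑ i, |(μ (B i)).toReal - (ν (B i)).toReal|}

/-- The `m`-step transition law of the Markov chain with one-step kernel `p`, started at `s`. -/
noncomputable def stepDist {S : Type*} [MeasurableSpace S] (p : S → Measure S) :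
    ℕ → S → Measure S
  | 0, s => Measure.dirac s
  | n + 1, s => (stepDist p n s).bind p

section Aux

variable {S : Type*} [MeasurableSpace S]

/-- sup over measurable sets of `μ B - ν B`. -/
noncomputable def supDiff (μ ν : Measure S) : ℝ :=
  sSup ((fun B => (μ B).toReal - (ν B).toReal) '' {B : Set S | MeasurableSet B})

lemma supDiff_set_nonempty (μ ν : Measure S) :
    ((fun B => (μ B).toReal - (ν B).toReal) '' {B : Set S | MeasurableSet B}).Nonempty :=
  ⟨_, ⟨∅, MeasurableSet.empty, rfl⟩⟩

lemma prob_toReal_le_one (μ : Measure S) [IsProbabilityMeasure μ] (B : Set S) :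
    (μ B).toReal ≤ 1 := by
  have := ENNReal.toReal_mono ENNReal.one_ne_top (prob_le_one (μ := μ) (s := B))
  simpa using this

lemma supDiff_bddAbove (μ ν : Measure S) [IsProbabilityMeasure μ] :
    BddAbove ((fun B => (μ B).toReal - (ν B).toReal) '' {B : Set S | MeasurableSet B}) := by
  refine ⟨1, ?_⟩
  rintro x ⟨B, hB, rfl⟩
  have h1 : (μ B).toReal ≤ 1 := prob_toReal_le_one μ B
  have h2 : 0 ≤ (ν B).toReal := ENNReal.toReal_nonneg
  dsimp only
  linarith

lemma le_supDiff {μ ν : Measure S} [IsProbabilityMeasure μ] {B : Set S} (hB : MeasurableSet B) :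
    (μ B).toReal - (ν B).toReal ≤ supDiff μ ν :=
  le_csSup (supDiff_bddAbove μ ν) ⟨B, hB, rfl⟩

lemma supDiff_nonneg (μ ν : Measure S) [IsProbabilityMeasure μ] : 0 ≤ supDiff μ ν := by
  have := le_supDiff (μ := μ) (ν := ν) MeasurableSet.empty
  simpa using this

lemma supDiff_le {μ ν : Measure S} {c : ℝ}
    (hc : ∀ B, MeasurableSet B → (μ B).toReal - (ν B).toReal ≤ c) : supDiff μ ν ≤ c :=
  csSup_le (supDiff_set_nonempty μ ν) (by rintro x ⟨B, hB, rfl⟩; exact hc B hB)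

lemma toReal_compl (μ : Measure S) [IsProbabilityMeasure μ] {B : Set S} (hB : MeasurableSet B) :
    (μ Bᶜ).toReal = 1 - (μ B).toReal := by
  rw [prob_compl_eq_one_sub hB,
    ENNReal.toReal_sub_of_le (prob_le_one) ENNReal.one_ne_top]
  simp

lemma tvDist_bddAbove (μ ν : Measure S) [IsProbabilityMeasure μ] [IsProbabilityMeasure ν] :
    BddAbove {x : ℝ | ∃ (n : ℕ) (B : Fin n → Set S), (∀ i, MeasurableSet (B i)) ∧
      (Pairwise fun i j => Disjoint (B i) (B j)) ∧ (⋃ i, B i) = Set.univ ∧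
      x = ∑ i, |(μ (B i)).toReal - (ν (B i)).toReal|} := by
  refine ⟨2, ?_⟩
  rintro x ⟨n, B, hmeas, hdisj, hcover, rfl⟩
  have hsum : ∀ (ρ : Measure S), IsProbabilityMeasure ρ → ∑ i, (ρ (B i)).toReal = 1 := by
    intro ρ hρ
    have h1 : ρ (⋃ i, B i) = ∑' i, ρ (B i) := measure_iUnion hdisj hmeas
    rw [hcover, measure_univ, tsum_fintype] at h1
    have h2 := congrArg ENNReal.toReal h1
    rw [ENNReal.toReal_sum (fun i _ => measure_ne_top ρ _)] at h2
    simpa using h2.symm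
  have h3 : ∑ i, |(μ (B i)).toReal - (ν (B i)).toReal|
      ≤ ∑ i, ((μ (B i)).toReal + (ν (B i)).toReal) := by
    refine Finset.sum_le_sum fun i _ => ?_
    have h4 : 0 ≤ (μ (B i)).toReal := ENNReal.toReal_nonneg
    have h5 : 0 ≤ (ν (B i)).toReal := ENNReal.toReal_nonneg
    exact abs_le.mpr ⟨by linarith, by linarith⟩
  rw [Finset.sum_add_distrib, hsum μ inferInstance, hsum ν inferInstance] at h3
  linarith

lemma tvDist_nonneg (μ ν : Measure S) [IsProbabilityMeasure μ] [IsProbabilityMeasure ν] :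
    0 ≤ tvDist μ ν := by
  have hmem : (0 : ℝ) ∈ {x : ℝ | ∃ (n : ℕ) (B : Fin n → Set S), (∀ i, MeasurableSet (B i)) ∧
      (Pairwise fun i j => Disjoint (B i) (B j)) ∧ (⋃ i, B i) = Set.univ ∧
      x = ∑ i, |(μ (B i)).toReal - (ν (B i)).toReal|} := by
    refine ⟨1, fun _ => Set.univ, fun _ => MeasurableSet.univ, Subsingleton.pairwise, Set.iUnion_const _, ?_⟩
    simp [measure_univ]
  exact le_csSup (tvDist_bddAbove μ ν) hmem

lemma le_tvDist {μ ν : Measure S} [IsProbabilityMeasure μ] [IsProbabilityMeasure ν]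
    {B : Set S} (hB : MeasurableSet B) :
    2 * ((μ B).toReal - (ν B).toReal) ≤ tvDist μ ν := by
  set x : ℝ := |(μ B).toReal - (ν B).toReal| + |(μ Bᶜ).toReal - (ν Bᶜ).toReal| with hx
  have hmem : x ∈ {x : ℝ | ∃ (n : ℕ) (B : Fin n → Set S), (∀ i, MeasurableSet (B i)) ∧
      (Pairwise fun i j => Disjoint (B i) (B j)) ∧ (⋃ i, B i) = Set.univ ∧
      x = ∑ i, |(μ (B i)).toReal - (ν (B i)).toReal|} := by
    refine ⟨2, ![B, Bᶜ], ?_, ?_, ?_, ?_⟩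
    · intro i; fin_cases i <;> [exact hB; exact hB.compl]
    · intro i j hij
      fin_cases i <;> fin_cases j <;>
        simp_all [disjoint_compl_right, disjoint_compl_left]
    · ext y; simp [Fin.exists_fin_two]; exact em _
    · rw [Fin.sum_univ_two]; rfl
  have hle : x ≤ tvDist μ ν := le_csSup (tvDist_bddAbove μ ν) hmem
  have h1 : (μ Bᶜ).toReal = 1 - (μ B).toReal := toReal_compl μ hB
  have h2 : (ν Bᶜ).toReal = 1 - (ν B).toReal := toReal_compl ν hB
  have h3 : (μ B).toReal - (ν B).toReal ≤ |(μ B).toReal - (ν B).toReal| := le_abs_self _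
  have h5 := neg_abs_le ((μ Bᶜ).toReal - (ν Bᶜ).toReal)
  rw [h1, h2] at h5
  rw [hx, h1, h2] at hle
  linarith

lemma le_tvDist' {μ ν : Measure S} [IsProbabilityMeasure μ] [IsProbabilityMeasure ν]
    {B : Set S} (hB : MeasurableSet B) :
    2 * ((ν B).toReal - (μ B).toReal) ≤ tvDist μ ν := by
  have := le_tvDist (μ := μ) (ν := ν) hB.compl
  rw [toReal_compl μ hB, toReal_compl ν hB] at this
  linarith

lemma supDiff_le_half_tvDist (μ ν : Measure S) [IsProbabilityMeasure μ] [IsProbabilityMeasure ν] :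
    2 * supDiff μ ν ≤ tvDist μ ν := by
  have : supDiff μ ν ≤ tvDist μ ν / 2 :=
    supDiff_le fun B hB => by linarith [le_tvDist (μ := μ) (ν := ν) hB]
  linarith

lemma tvDist_le_two_supDiff (μ ν : Measure S) [IsProbabilityMeasure μ] [IsProbabilityMeasure ν] :
    tvDist μ ν ≤ 2 * supDiff μ ν := by
  refine csSup_le ⟨0, ?_⟩ ?_
  · refine ⟨1, fun _ => Set.univ, fun _ => MeasurableSet.univ, Subsingleton.pairwise, Set.iUnion_const _, ?_⟩
    simp [measure_univ]
  rintro x ⟨n, B, hmeas, hdisj, hcover, rfl⟩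
  classical
  set s : Finset (Fin n) := Finset.univ.filter fun i => (ν (B i)).toReal ≤ (μ (B i)).toReal with hs
  have hsum : ∀ (ρ : Measure S), IsProbabilityMeasure ρ → ∑ i, (ρ (B i)).toReal = 1 := by
    intro ρ hρ
    have h1 : ρ (⋃ i, B i) = ∑' i, ρ (B i) := measure_iUnion hdisj hmeas
    rw [hcover, measure_univ, tsum_fintype] at h1
    have h2 := congrArg ENNReal.toReal h1
    rw [ENNReal.toReal_sum (fun i _ => measure_ne_top ρ _)] at h2
    simpa using h2.symm
  set P : Set S := ⋃ i ∈ s, B i with hP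
  have hPm : MeasurableSet P := s.measurableSet_biUnion fun i _ => hmeas i
  have hbi : ∀ (ρ : Measure S), IsProbabilityMeasure ρ →
      (ρ P).toReal = ∑ i ∈ s, (ρ (B i)).toReal := by
    intro ρ hρ
    rw [hP, measure_biUnion_finset ((hdisj.set_pairwise _) : _) fun i _ => hmeas i,
      ENNReal.toReal_sum fun i _ => measure_ne_top ρ _]
  have hsplit : ∑ i, |(μ (B i)).toReal - (ν (B i)).toReal|
      = ∑ i ∈ s, ((μ (B i)).toReal - (ν (B i)).toReal)
        + ∑ i ∈ sᶜ, ((ν (B i)).toReal - (μ (B i)).toReal) := by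
    rw [← Finset.sum_add_sum_compl s fun i => |(μ (B i)).toReal - (ν (B i)).toReal|]
    congr 1
    · refine Finset.sum_congr rfl fun i hi => ?_
      rw [hs, Finset.mem_filter] at hi
      exact abs_of_nonneg (by linarith [hi.2])
    · refine Finset.sum_congr rfl fun i hi => ?_
      simp only [Finset.mem_compl, hs, Finset.mem_filter, Finset.mem_univ, true_and] at hi
      rw [abs_of_nonpos (by linarith)]
      ring
  have hμs : ∑ i ∈ sᶜ, (μ (B i)).toReal = 1 - ∑ i ∈ s, (μ (B i)).toReal := by
    have := Finset.sum_add_sum_compl s fun i => (μ (B i)).toReal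
    rw [hsum μ inferInstance] at this
    linarith
  have hνs : ∑ i ∈ sᶜ, (ν (B i)).toReal = 1 - ∑ i ∈ s, (ν (B i)).toReal := by
    have := Finset.sum_add_sum_compl s fun i => (ν (B i)).toReal
    rw [hsum ν inferInstance] at this
    linarith
  rw [hsplit, Finset.sum_sub_distrib, Finset.sum_sub_distrib, hμs, hνs]
  have hfin : (μ P).toReal - (ν P).toReal ≤ supDiff μ ν := le_supDiff hPm
  rw [hbi μ inferInstance, hbi ν inferInstance] at hfin
  linarith

/-- Dobrushin-type contraction bound. -/
lemma dobrushin (μ ν : Measure S) [IsProbabilityMeasure μ] [IsProbabilityMeasure ν]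
    (k : S → Measure S) (hk : ∀ s, IsProbabilityMeasure (k s)) (hmk : Measurable k)
    (β : ℝ) (hβ : 0 ≤ β)
    (hks : ∀ s s' B, MeasurableSet B → (k s B).toReal - (k s' B).toReal ≤ β) :
    supDiff (μ.bind k) (ν.bind k) ≤ β * supDiff μ ν := by
  have hne : Nonempty S := by
    by_contra h
    rw [not_nonempty_iff] at h
    have h0 : (Set.univ : Set S) = ∅ := Set.univ_eq_empty_iff.mpr h
    have := measure_univ (μ := μ)
    rw [h0, measure_empty] at this
    exact zero_ne_one this
  refine supDiff_le fun B hB => ?_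
  have hfm' : Measurable fun s => k s B := (Measure.measurable_coe hB).comp hmk
  set f : S → ℝ := fun s => (k s B).toReal with hf
  have hfm : Measurable f := ENNReal.measurable_toReal.comp hfm'
  have hf0 : ∀ s, 0 ≤ f s := fun s => ENNReal.toReal_nonneg
  have hf1 : ∀ s, f s ≤ 1 := fun s => by
    haveI := hk s; exact prob_toReal_le_one (k s) B
  have hrep : ∀ (ρ : Measure S), ((ρ.bind k) B).toReal = ∫ s, f s ∂ρ := by
    intro ρ
    rw [Measure.bind_apply hB hmk.aemeasurable,
      ← integral_toReal hfm'.aemeasurable (ae_of_all _ fun s => measure_lt_top (k s) B)]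
  have hrne : (Set.range f).Nonempty := Set.range_nonempty f
  have hbdd : BddAbove (Set.range f) := ⟨1, by rintro _ ⟨s, rfl⟩; exact hf1 s⟩
  have hbddb : BddBelow (Set.range f) := ⟨0, by rintro _ ⟨s, rfl⟩; exact hf0 s⟩
  set M := sSup (Set.range f) with hM
  set mI := sInf (Set.range f) with hmI
  have hMm : M - mI ≤ β := by
    have h5 : ∀ s, f s ≤ mI + β := by
      intro s
      have h1 : f s - β ≤ mI := by
        refine le_csInf hrne ?_
        rintro _ ⟨s', rfl⟩
        have := hks s s' B hB
        simp only [hf]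
        linarith
      linarith
    have := csSup_le hrne (by rintro _ ⟨s, rfl⟩; exact h5 s)
    linarith
  set c : ℝ := β / 2 - (M + mI) / 2 with hc
  set g : S → ℝ := fun s => f s + c with hg
  have hgm : Measurable g := hfm.add_const c
  have hfsM : ∀ s, f s ≤ M := fun s => le_csSup hbdd ⟨s, rfl⟩
  have hfsm : ∀ s, mI ≤ f s := fun s => csInf_le hbddb ⟨s, rfl⟩
  have hg0 : ∀ s, 0 ≤ g s := fun s => by
    have := hfsm s; simp only [hg, hc]; linarith [hMm]
  have hgβ : ∀ s, g s ≤ β := fun s => by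
    have := hfsM s; simp only [hg, hc]; linarith [hMm]
  have hint : ∀ (ρ : Measure S), IsFiniteMeasure ρ → Integrable g ρ := by
    intro ρ hρ
    refine Integrable.mono' (integrable_const β) hgm.aestronglyMeasurable
      (ae_of_all _ fun s => ?_)
    rw [Real.norm_eq_abs, abs_of_nonneg (hg0 s)]
    exact hgβ s
  obtain ⟨E, hE, hE1, hE2⟩ := hahn_decomposition (μ := μ) (ν := ν)
  have hle1 : ν.restrict E ≤ μ.restrict E := by
    rw [Measure.le_iff]
    intro t ht
    rw [Measure.restrict_apply ht, Measure.restrict_apply ht]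
    exact hE1 _ (ht.inter hE) Set.inter_subset_right
  have hle2 : μ.restrict Eᶜ ≤ ν.restrict Eᶜ := by
    rw [Measure.le_iff]
    intro t ht
    rw [Measure.restrict_apply ht, Measure.restrict_apply ht]
    exact hE2 _ (ht.inter hE.compl) Set.inter_subset_right
  set ρ := μ.restrict E - ν.restrict E with hρdef
  have hρ : ν.restrict E + ρ = μ.restrict E := by
    rw [add_comm]
    exact Measure.sub_add_cancel_of_le hle1
  have hi1 : ∫ s, g s ∂(μ.restrict E) = ∫ s, g s ∂(ν.restrict E) + ∫ s, g s ∂ρ := by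
    rw [← hρ, integral_add_measure (hint _ inferInstance) (hint _ inferInstance)]
  have hρu : (ρ Set.univ).toReal = (μ E).toReal - (ν E).toReal := by
    rw [hρdef, Measure.sub_apply MeasurableSet.univ hle1, Measure.restrict_apply_univ,
      Measure.restrict_apply_univ,
      ENNReal.toReal_sub_of_le (hE1 E hE subset_rfl) (measure_ne_top μ E)]
  have hib : ∫ s, g s ∂ρ ≤ β * (ρ Set.univ).toReal := by
    calc ∫ s, g s ∂ρ ≤ ∫ _, β ∂ρ :=
          integral_mono (hint _ inferInstance) (integrable_const β) hgβ
    _ = (ρ Set.univ).toReal • β := integral_const β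
    _ = β * (ρ Set.univ).toReal := by rw [smul_eq_mul, mul_comm]
  have hcompl : ∫ s, g s ∂(μ.restrict Eᶜ) ≤ ∫ s, g s ∂(ν.restrict Eᶜ) :=
    integral_mono_measure hle2 (ae_of_all _ hg0) (hint _ inferInstance)
  have hgsplit : ∀ (τ : Measure S), IsProbabilityMeasure τ →
      ∫ s, g s ∂τ = ∫ s, g s ∂(τ.restrict E) + ∫ s, g s ∂(τ.restrict Eᶜ) := by
    intro τ hτ
    exact (integral_add_compl hE (hint τ inferInstance)).symm
  have hfg : ∀ (τ : Measure S), IsProbabilityMeasure τ →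
      ∫ s, g s ∂τ = ∫ s, f s ∂τ + c := by
    intro τ hτ
    have hfint : Integrable f τ := by
      refine Integrable.mono' (integrable_const 1) hfm.aestronglyMeasurable
        (ae_of_all _ fun s => ?_)
      rw [Real.norm_eq_abs, abs_of_nonneg (hf0 s)]
      exact hf1 s
    rw [hg]
    rw [integral_add hfint (integrable_const c), integral_const, probReal_univ]
    simp
  have hmain : ∫ s, g s ∂μ - ∫ s, g s ∂ν ≤ β * supDiff μ ν := by
    rw [hgsplit μ inferInstance, hgsplit ν inferInstance, hi1]
    have h6 : (μ E).toReal - (ν E).toReal ≤ supDiff μ ν := le_supDiff hE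
    have h7 : β * (ρ Set.univ).toReal ≤ β * supDiff μ ν := by
      rw [hρu]
      exact mul_le_mul_of_nonneg_left h6 hβ
    linarith [hib, hcompl]
  rw [hrep μ, hrep ν]
  have := hfg μ inferInstance
  have := hfg ν inferInstance
  linarith [hmain]

end Aux

section Chain

variable {S : Type*} [MeasurableSpace S]

lemma isProbabilityMeasure_bind (μ : Measure S) [IsProbabilityMeasure μ]
    (k : S → Measure S) (hk : ∀ s, IsProbabilityMeasure (k s)) (hmk : Measurable k) :
    IsProbabilityMeasure (μ.bind k) := by
  constructor
  rw [Measure.bind_apply MeasurableSet.univ hmk.aemeasurable]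
  have h : ∀ s, k s Set.univ = 1 := fun s => (hk s).measure_univ
  simp only [h]
  rw [lintegral_one, measure_univ]

lemma measurable_stepDist (p : S → Measure S) (hmp : Measurable p) (n : ℕ) :
    Measurable (stepDist p n) := by
  induction n with
  | zero => exact Measure.measurable_dirac
  | succ n ih => exact (Measure.measurable_bind' hmp).comp ih

lemma isProbabilityMeasure_stepDist (p : S → Measure S) (hp : ∀ s, IsProbabilityMeasure (p s))
    (hmp : Measurable p) (n : ℕ) (s : S) : IsProbabilityMeasure (stepDist p n s) := by
  induction n with
  | zero => exact Measure.dirac.isProbabilityMeasure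
  | succ n ih => exact isProbabilityMeasure_bind _ _ hp hmp

lemma stepDist_add (p : S → Measure S) (hmp : Measurable p) (a b : ℕ) (s : S) :
    stepDist p (a + b) s = (stepDist p a s).bind (stepDist p b) := by
  induction b with
  | zero =>
    show stepDist p a s = (stepDist p a s).bind Measure.dirac
    rw [Measure.bind_dirac]
  | succ b ih =>
    show (stepDist p (a + b) s).bind p = _
    rw [ih, Measure.bind_bind (measurable_stepDist p hmp b).aemeasurable hmp.aemeasurable]
    rfl

lemma bind_stepDist_add (p : S → Measure S) (hmp : Measurable p) (μ : Measure S) (a b : ℕ) :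
    μ.bind (stepDist p (a + b)) = (μ.bind (stepDist p a)).bind (stepDist p b) := by
  have h : stepDist p (a + b) = fun s => (stepDist p a s).bind (stepDist p b) :=
    funext fun s => stepDist_add p hmp a b s
  rw [h, ← Measure.bind_bind (measurable_stepDist p hmp a).aemeasurable (measurable_stepDist p hmp b).aemeasurable]

lemma supDiff_bind_stepDist_le (p : S → Measure S) (hp : ∀ s, IsProbabilityMeasure (p s))
    (hmp : Measurable p) (μ ν : Measure S) [IsProbabilityMeasure μ] [IsProbabilityMeasure ν]
    (r : ℕ) : supDiff (μ.bind (stepDist p r)) (ν.bind (stepDist p r)) ≤ supDiff μ ν := by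
  induction r with
  | zero =>
    have h : μ.bind (stepDist p 0) = μ := Measure.bind_dirac
    have h' : ν.bind (stepDist p 0) = ν := Measure.bind_dirac
    rw [h, h']
  | succ r ih =>
    have h : (r : ℕ) + 1 = r + 1 := rfl
    rw [show r + 1 = r + 1 from rfl, bind_stepDist_add p hmp μ r 1,
      bind_stepDist_add p hmp ν r 1]
    haveI := isProbabilityMeasure_bind μ _ (isProbabilityMeasure_stepDist p hp hmp r)
      (measurable_stepDist p hmp r)
    haveI := isProbabilityMeasure_bind ν _ (isProbabilityMeasure_stepDist p hp hmp r)
      (measurable_stepDist p hmp r)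
    have hd := dobrushin (μ.bind (stepDist p r)) (ν.bind (stepDist p r)) (stepDist p 1)
      (isProbabilityMeasure_stepDist p hp hmp 1) (measurable_stepDist p hmp 1) 1 zero_le_one
      (fun s s' B hB => by
        haveI := isProbabilityMeasure_stepDist p hp hmp 1 s
        have h1 : ((stepDist p 1 s) B).toReal ≤ 1 := prob_toReal_le_one _ B
        have h2 : (0:ℝ) ≤ ((stepDist p 1 s') B).toReal := ENNReal.toReal_nonneg
        linarith)
    rw [one_mul] at hd
    exact hd.trans ih

end Chain

lemma key_numeric {C α : ℝ} (hC : 0 < C) (hα0 : 0 < α) (hα1 : α < 1) :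
    C * α ^ (⌈Real.logb (1/α) C⌉₊ + 1) ≤ α := by
  set n := ⌈Real.logb (1/α) C⌉₊ with hn
  have hb : 1 < 1/α := one_lt_one_div hα0 hα1
  have h1 : C ≤ (1/α) ^ n := by
    have h2 : Real.logb (1/α) C ≤ (n : ℝ) := Nat.le_ceil _
    have h3 : (1/α) ^ Real.logb (1/α) C ≤ (1/α) ^ (n : ℝ) :=
      Real.rpow_le_rpow_of_exponent_le hb.le h2
    rwa [Real.rpow_logb (by positivity) (ne_of_gt hb) hC, Real.rpow_natCast] at h3
  have hαn : 0 < α ^ n := pow_pos hα0 n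
  have h4 : C * α ^ n ≤ 1 := by
    rw [one_div, inv_pow] at h1
    calc C * α ^ n ≤ (α ^ n)⁻¹ * α ^ n := by nlinarith
    _ = 1 := inv_mul_cancel₀ (ne_of_gt hαn)
  calc C * α ^ (n + 1) = C * α ^ n * α := by ring
  _ ≤ 1 * α := by nlinarith
  _ = α := one_mul α

theorem stmt5 {S : Type*} [MeasurableSpace S] (p : S → Measure S)
    (hp : ∀ s, IsProbabilityMeasure (p s)) (hmp : Measurable p)
    (C α : ℝ) (hC : 0 < C) (hα : α ∈ Set.Ioo (0 : ℝ) 1)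
    (μinf : Measure S) [IsProbabilityMeasure μinf] (hinv : μinf.bind p = μinf)
    (herg : ∀ s t, tvDist (stepDist p t s) μinf ≤ C * α ^ t)
    (ν1 ν2 : Measure S) [IsProbabilityMeasure ν1] [IsProbabilityMeasure ν2] :
    ∑' i : ℕ, tvDist (ν1.bind (stepDist p i)) (ν2.bind (stepDist p i)) ≤
      ((⌈Real.logb (1 / α) C⌉₊ + 1 : ℕ) : ℝ) / (1 - α) * tvDist ν1 ν2 := by
  obtain ⟨hα0, hα1⟩ := hα
  set m : ℕ := ⌈Real.logb (1 / α) C⌉₊ + 1 with hm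
  have hm0 : 0 < m := Nat.succ_pos _
  set T : ℝ := tvDist ν1 ν2 with hT
  set D : ℝ := supDiff ν1 ν2 with hD
  have hT0 : 0 ≤ T := tvDist_nonneg ν1 ν2
  have h2D : 2 * D ≤ T := supDiff_le_half_tvDist ν1 ν2
  have hprob : ∀ (μ : Measure S) (_ : IsProbabilityMeasure μ) (j : ℕ),
      IsProbabilityMeasure (μ.bind (stepDist p j)) := fun μ hμ j =>
    isProbabilityMeasure_bind μ _ (isProbabilityMeasure_stepDist p hp hmp j)
      (measurable_stepDist p hmp j)
  -- the m-step kernel contracts with factor α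
  have hks : ∀ s s' B, MeasurableSet B →
      ((stepDist p m s) B).toReal - ((stepDist p m s') B).toReal ≤ α := by
    intro s s' B hB
    haveI := isProbabilityMeasure_stepDist p hp hmp m s
    haveI := isProbabilityMeasure_stepDist p hp hmp m s'
    have h1 : 2 * (((stepDist p m s) B).toReal - (μinf B).toReal) ≤ C * α ^ m :=
      (le_tvDist hB).trans (herg s m)
    have h2 : 2 * ((μinf B).toReal - ((stepDist p m s') B).toReal) ≤ C * α ^ m :=
      (le_tvDist' hB).trans (herg s' m)
    have h3 : C * α ^ m ≤ α := key_numeric hC hα0 hα1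
    linarith
  -- block contraction
  have hblock : ∀ q : ℕ,
      supDiff (ν1.bind (stepDist p (q * m))) (ν2.bind (stepDist p (q * m))) ≤ α ^ q * D := by
    intro q
    induction q with
    | zero =>
      simp only [Nat.zero_mul, pow_zero, one_mul]
      have h : ∀ ν : Measure S, ν.bind (stepDist p 0) = ν := fun ν => Measure.bind_dirac
      rw [h, h]
    | succ q ih =>
      have hq : (q + 1) * m = q * m + m := by ring
      rw [hq, bind_stepDist_add p hmp ν1 (q*m) m, bind_stepDist_add p hmp ν2 (q*m) m]
      haveI := hprob ν1 inferInstance (q*m)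
      haveI := hprob ν2 inferInstance (q*m)
      have hd := dobrushin (ν1.bind (stepDist p (q*m))) (ν2.bind (stepDist p (q*m)))
        (stepDist p m) (isProbabilityMeasure_stepDist p hp hmp m)
        (measurable_stepDist p hmp m) α hα0.le hks
      refine hd.trans ?_
      rw [pow_succ, mul_comm (α ^ q) α, mul_assoc]
      exact mul_le_mul_of_nonneg_left ih hα0.le
  -- per-index bound
  have hper : ∀ i : ℕ, tvDist (ν1.bind (stepDist p i)) (ν2.bind (stepDist p i))
      ≤ α ^ (i / m) * T := by
    intro i
    haveI := hprob ν1 inferInstance i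
    haveI := hprob ν2 inferInstance i
    have hqm : i / m * m + i % m = i := Nat.div_add_mod' i m
    have hsd : supDiff (ν1.bind (stepDist p i)) (ν2.bind (stepDist p i))
        ≤ α ^ (i / m) * D := by
      conv_lhs => rw [← hqm]
      rw [bind_stepDist_add p hmp ν1 (i/m*m) (i%m), bind_stepDist_add p hmp ν2 (i/m*m) (i%m)]
      haveI := hprob ν1 inferInstance (i/m*m)
      haveI := hprob ν2 inferInstance (i/m*m)
      exact (supDiff_bind_stepDist_le p hp hmp _ _ (i % m)).trans (hblock (i/m))
    have h5 := tvDist_le_two_supDiff (ν1.bind (stepDist p i)) (ν2.bind (stepDist p i))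
    have h6 : (0:ℝ) ≤ α ^ (i/m) := pow_nonneg hα0.le _
    nlinarith
  -- sum the geometric blocks
  have hgeo : ∀ n : ℕ, ∑ i ∈ Finset.range (m * n), α ^ (i / m)
      = (m : ℝ) * ∑ q ∈ Finset.range n, α ^ q := by
    intro n
    induction n with
    | zero => simp
    | succ n ih =>
      have h7 : ∀ j, j < m → (m * n + j) / m = n := by
        intro j hj
        rw [Nat.mul_add_div hm0, Nat.div_eq_of_lt hj, add_zero]
      have h8 : ∑ j ∈ Finset.range m, α ^ ((m * n + j) / m) = (m : ℝ) * α ^ n := by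
        rw [Finset.sum_congr rfl fun j hj => by
          rw [h7 j (Finset.mem_range.mp hj)]]
        rw [Finset.sum_const, Finset.card_range, nsmul_eq_mul]
      rw [Nat.mul_succ, Finset.sum_range_add, ih, h8, Finset.sum_range_succ]
      ring
  have hgsum : ∀ n : ℕ, ∑ q ∈ Finset.range n, α ^ q ≤ 1 / (1 - α) := by
    intro n
    rw [geom_sum_eq (ne_of_lt hα1) n]
    have h9 : (α ^ n - 1) / (α - 1) = (1 - α ^ n) / (1 - α) := by
      rw [div_eq_div_iff (by linarith) (by linarith)]
      ring
    rw [h9]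
    have h10 : (0:ℝ) ≤ α ^ n := pow_nonneg hα0.le n
    apply div_le_div_of_nonneg_right ?_ (by linarith)
    linarith
  refine Real.tsum_le_of_sum_range_le (fun i => ?_) (fun n => ?_)
  · haveI := hprob ν1 inferInstance i
    haveI := hprob ν2 inferInstance i
    exact tvDist_nonneg _ _
  · calc ∑ i ∈ Finset.range n, tvDist (ν1.bind (stepDist p i)) (ν2.bind (stepDist p i))
        ≤ ∑ i ∈ Finset.range n, α ^ (i / m) * T := Finset.sum_le_sum fun i _ => hper i
      _ ≤ ∑ i ∈ Finset.range (m * n), α ^ (i / m) * T := by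
          refine Finset.sum_le_sum_of_subset_of_nonneg ?_ fun i _ _ =>
            mul_nonneg (pow_nonneg hα0.le _) hT0
          exact Finset.range_subset_range.mpr (Nat.le_mul_of_pos_left n hm0)
      _ = ((m : ℝ) * ∑ q ∈ Finset.range n, α ^ q) * T := by
          rw [← Finset.sum_mul, hgeo n]
      _ ≤ ((m : ℝ) * (1 / (1 - α))) * T :=
          mul_le_mul_of_nonneg_right
            (mul_le_mul_of_nonneg_left (hgsum n) (Nat.cast_nonneg m)) hT0
      _ = ((⌈Real.logb (1 / α) C⌉₊ + 1 : ℕ) : ℝ) / (1 - α) * T := by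
          rw [hm]
          push_cast
          ring
end

section
/- Sensitivity of stationary distributions: let $p_1, p_2$ be two Markov transition kernels on $\mathcal{S}$ with invariant distributions $\mu_1, \mu_2$, respectively. Suppose the chain with kernel $p_2$ is uniformly ergodic with constants $C > 0$, $\alpha \in (0,1)$. Then $\|\mu_1 - \mu_2\|_{TV} \leq \frac{m^\star}{1-\alpha} \int_{\mathcal{S}} \|p_1(s,\cdot) - p_2(s,\cdot)\|_{TV}\, d\mu_1(s)$, where $m^\star = \lceil \log_{1/\alpha}(C) \rceil + 1$. In particular, $\|\mu_1 - \mu_2\|_{TV} \leq \frac{m^\star}{1-\alpha}\,\sup_{s} \|p_1(s,\cdot) - p_2(s,\cdot)\|_{TV}$. -/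
open MeasureTheory

/-- The span of a real-valued function: `sup v - inf v`. -/
noncomputable def spanF {Z : Type*} (v : Z → ℝ) : ℝ :=
  sSup (Set.range v) - sInf (Set.range v)

namespace TVAux

variable {S : Type*} [MeasurableSpace S]

def tvSet (μ ν : Measure S) : Set ℝ :=
  {x : ℝ | ∃ (n : ℕ) (B : Fin n → Set S), (∀ i, MeasurableSet (B i)) ∧
    (Pairwise fun i j => Disjoint (B i) (B j)) ∧ (⋃ i, B i) = Set.univ ∧
    x = ∑ i, |(μ (B i)).toReal - (ν (B i)).toReal|}

lemma tvDist_eq (μ ν : Measure S) : tvDist μ ν = sSup (tvSet μ ν) := rfl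

lemma zero_mem_tvSet (μ ν : Measure S) [IsProbabilityMeasure μ] [IsProbabilityMeasure ν] :
    (0 : ℝ) ∈ tvSet μ ν := by
  refine ⟨1, fun _ => Set.univ, fun _ => MeasurableSet.univ, ?_,
    by rw [Set.iUnion_const], by simp⟩
  intro i j hij
  exact absurd (Subsingleton.elim i j) hij

lemma tvSet_nonempty (μ ν : Measure S) [IsProbabilityMeasure μ] [IsProbabilityMeasure ν] :
    (tvSet μ ν).Nonempty := ⟨0, zero_mem_tvSet μ ν⟩

lemma sum_measure_partition (μ : Measure S) [IsProbabilityMeasure μ] {n : ℕ}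
    {B : Fin n → Set S} (hBm : ∀ i, MeasurableSet (B i))
    (hBd : Pairwise fun i j => Disjoint (B i) (B j)) (hBu : (⋃ i, B i) = Set.univ) :
    ∑ i, (μ (B i)).toReal = 1 := by
  have h : ∑ i, μ (B i) = 1 := by
    rw [← tsum_fintype (L := SummationFilter.unconditional _), ← measure_iUnion hBd hBm, hBu, measure_univ]
  rw [← ENNReal.toReal_sum (fun i _ => measure_ne_top μ (B i)), h, ENNReal.toReal_one]

lemma tvSet_le_two (μ ν : Measure S) [IsProbabilityMeasure μ] [IsProbabilityMeasure ν] :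
    ∀ x ∈ tvSet μ ν, x ≤ 2 := by
  rintro x ⟨n, B, hBm, hBd, hBu, rfl⟩
  calc ∑ i, |(μ (B i)).toReal - (ν (B i)).toReal|
      ≤ ∑ i, ((μ (B i)).toReal + (ν (B i)).toReal) := by
        refine Finset.sum_le_sum fun i _ => ?_
        refine (abs_sub _ _).trans ?_
        simp [abs_of_nonneg ENNReal.toReal_nonneg]
    _ = 2 := by
        rw [Finset.sum_add_distrib, sum_measure_partition μ hBm hBd hBu,
          sum_measure_partition ν hBm hBd hBu]; norm_num

lemma tvSet_bddAbove (μ ν : Measure S) [IsProbabilityMeasure μ] [IsProbabilityMeasure ν] :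
    BddAbove (tvSet μ ν) := ⟨2, fun x hx => tvSet_le_two μ ν x hx⟩

lemma le_tvDist {μ ν : Measure S} [IsProbabilityMeasure μ] [IsProbabilityMeasure ν]
    {x : ℝ} (hx : x ∈ tvSet μ ν) : x ≤ tvDist μ ν :=
  le_csSup (tvSet_bddAbove μ ν) hx

lemma tvDist_nonneg (μ ν : Measure S) [IsProbabilityMeasure μ] [IsProbabilityMeasure ν] :
    0 ≤ tvDist μ ν := le_tvDist (zero_mem_tvSet μ ν)

lemma tvDist_le_two (μ ν : Measure S) [IsProbabilityMeasure μ] [IsProbabilityMeasure ν] :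
    tvDist μ ν ≤ 2 := csSup_le (tvSet_nonempty μ ν) (tvSet_le_two μ ν)

lemma pair_mem_tvSet (μ ν : Measure S) {T : Set S} (hT : MeasurableSet T) :
    |(μ T).toReal - (ν T).toReal| + |(μ Tᶜ).toReal - (ν Tᶜ).toReal| ∈ tvSet μ ν := by
  refine ⟨2, ![T, Tᶜ], ?_, ?_, ?_, ?_⟩
  · intro i; fin_cases i <;> simp [hT, hT.compl]
  · intro i j hij
    fin_cases i <;> fin_cases j <;>
      simp_all [disjoint_compl_right, disjoint_compl_left]
  · apply Set.eq_univ_of_univ_subset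
    intro x _
    rcases Classical.em (x ∈ T) with h | h
    · exact Set.mem_iUnion.2 ⟨0, h⟩
    · exact Set.mem_iUnion.2 ⟨1, h⟩
  · rw [Fin.sum_univ_two]; simp

lemma integrable_of_bdd {μ : Measure S} [IsFiniteMeasure μ] {f : S → ℝ} (hf : Measurable f)
    {c : ℝ} (hc : ∀ s, |f s| ≤ c) : Integrable f μ :=
  ⟨hf.aestronglyMeasurable, HasFiniteIntegral.of_bounded (C := c)
    (ae_of_all _ fun s => by simpa [Real.norm_eq_abs] using hc s)⟩

lemma integral_sub_le_of_le {μ ν : Measure S} [IsFiniteMeasure μ] [IsFiniteMeasure ν]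
    (hle : ν ≤ μ) {f : S → ℝ} (hf : Measurable f) {c : ℝ} (hc : ∀ s, |f s| ≤ c) :
    ∫ s, f s ∂μ - ∫ s, f s ∂ν ≤ c * ((μ Set.univ).toReal - (ν Set.univ).toReal) := by
  have hμ' : μ = μ - ν + ν := (Measure.sub_add_cancel_of_le hle).symm
  have hsub_le : μ - ν ≤ μ := Measure.sub_le
  haveI : IsFiniteMeasure (μ - ν) := isFiniteMeasure_of_le μ hsub_le
  have hint : ∫ s, f s ∂μ = ∫ s, f s ∂(μ - ν) + ∫ s, f s ∂ν := by
    conv_lhs => rw [hμ']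
    exact integral_add_measure (integrable_of_bdd hf hc) (integrable_of_bdd hf hc)
  have h1 : ∫ s, f s ∂(μ - ν) ≤ c * ((μ - ν) Set.univ).toReal := by
    calc ∫ s, f s ∂(μ - ν) ≤ ∫ _, c ∂(μ - ν) :=
          integral_mono (integrable_of_bdd hf hc) (integrable_const c)
            (fun s => (abs_le.1 (hc s)).2)
      _ = ((μ - ν) Set.univ).toReal * c := by rw [integral_const]; simp [smul_eq_mul, measureReal_def]
      _ = c * ((μ - ν) Set.univ).toReal := mul_comm _ _
  have h2 : ((μ - ν) Set.univ).toReal = (μ Set.univ).toReal - (ν Set.univ).toReal := by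
    rw [Measure.sub_apply MeasurableSet.univ hle,
      ENNReal.toReal_sub_of_le (hle _) (measure_ne_top μ _)]
  rw [← h2]; linarith

/-- Key test-function bound: for `|f| ≤ c`, `∫ f dμ - ∫ f dν ≤ c * tvDist μ ν`. -/
lemma integral_sub_le_tvDist (μ ν : Measure S) [IsProbabilityMeasure μ]
    [IsProbabilityMeasure ν] {f : S → ℝ} (hf : Measurable f) {c : ℝ} (hc0 : 0 ≤ c)
    (hc : ∀ s, |f s| ≤ c) :
    ∫ s, f s ∂μ - ∫ s, f s ∂ν ≤ c * tvDist μ ν := by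
  obtain ⟨T, hT, h1, h2⟩ := hahn_decomposition (μ := μ) (ν := ν)
  have hres1 : ν.restrict T ≤ μ.restrict T := by
    refine Measure.le_iff.2 fun A hA => ?_
    rw [Measure.restrict_apply hA, Measure.restrict_apply hA]
    exact h1 _ (hA.inter hT) Set.inter_subset_right
  have hres2 : μ.restrict Tᶜ ≤ ν.restrict Tᶜ := by
    refine Measure.le_iff.2 fun A hA => ?_
    rw [Measure.restrict_apply hA, Measure.restrict_apply hA]
    exact h2 _ (hA.inter hT.compl) Set.inter_subset_right
  have hsplitμ : ∫ s, f s ∂μ = ∫ s, f s ∂(μ.restrict T) + ∫ s, f s ∂(μ.restrict Tᶜ) :=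
    (integral_add_compl hT (integrable_of_bdd hf hc)).symm
  have hsplitν : ∫ s, f s ∂ν = ∫ s, f s ∂(ν.restrict T) + ∫ s, f s ∂(ν.restrict Tᶜ) :=
    (integral_add_compl hT (integrable_of_bdd hf hc)).symm
  have hA : ∫ s, f s ∂(μ.restrict T) - ∫ s, f s ∂(ν.restrict T) ≤
      c * ((μ T).toReal - (ν T).toReal) := by
    have := integral_sub_le_of_le hres1 hf hc
    simpa [Measure.restrict_apply_univ] using this
  have hB : ∫ s, f s ∂(μ.restrict Tᶜ) - ∫ s, f s ∂(ν.restrict Tᶜ) ≤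
      c * ((ν Tᶜ).toReal - (μ Tᶜ).toReal) := by
    have hneg : ∀ s, |(-f) s| ≤ c := fun s => by simpa using hc s
    have := integral_sub_le_of_le hres2 hf.neg hneg
    simp only [Pi.neg_apply, integral_neg, Measure.restrict_apply_univ] at this
    linarith
  have hT1 : (ν T).toReal ≤ (μ T).toReal :=
    ENNReal.toReal_le_toReal (measure_ne_top ν _) (measure_ne_top μ _) |>.2
      (h1 T hT subset_rfl)
  have hT2 : (μ Tᶜ).toReal ≤ (ν Tᶜ).toReal :=
    ENNReal.toReal_le_toReal (measure_ne_top μ _) (measure_ne_top ν _) |>.2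
      (h2 Tᶜ hT.compl subset_rfl)
  have hmem : ((μ T).toReal - (ν T).toReal) + ((ν Tᶜ).toReal - (μ Tᶜ).toReal) ∈ tvSet μ ν := by
    have := pair_mem_tvSet μ ν hT
    rwa [abs_of_nonneg (by linarith), abs_of_nonpos (by linarith),
      show -((μ Tᶜ).toReal - (ν Tᶜ).toReal) = (ν Tᶜ).toReal - (μ Tᶜ).toReal by ring] at this
  have htv : ((μ T).toReal - (ν T).toReal) + ((ν Tᶜ).toReal - (μ Tᶜ).toReal) ≤ tvDist μ ν :=
    le_tvDist hmem
  calc ∫ s, f s ∂μ - ∫ s, f s ∂ν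
      = (∫ s, f s ∂(μ.restrict T) - ∫ s, f s ∂(ν.restrict T)) +
        (∫ s, f s ∂(μ.restrict Tᶜ) - ∫ s, f s ∂(ν.restrict Tᶜ)) := by
        rw [hsplitμ, hsplitν]; ring
    _ ≤ c * (((μ T).toReal - (ν T).toReal) + ((ν Tᶜ).toReal - (μ Tᶜ).toReal)) := by
        rw [mul_add]; exact add_le_add hA hB
    _ ≤ c * tvDist μ ν := mul_le_mul_of_nonneg_left htv hc0

section Step

variable {p : S → Measure S}

lemma stepDist_measurable (hp : Measurable p) (n : ℕ) : Measurable (stepDist p n) := by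
  induction n with
  | zero => exact Measure.measurable_dirac
  | succ n ih => exact (Measure.measurable_bind' hp).comp ih

lemma isProb_bind (μ : Measure S) [IsProbabilityMeasure μ] {q : S → Measure S}
    (hq : Measurable q) (hqp : ∀ s, IsProbabilityMeasure (q s)) :
    IsProbabilityMeasure (μ.bind q) := by
  constructor
  rw [Measure.bind_apply MeasurableSet.univ hq.aemeasurable]
  simp only [measure_univ]
  simp

lemma stepDist_prob (hp : Measurable p) (hpp : ∀ s, IsProbabilityMeasure (p s)) (n : ℕ)
    (s : S) : IsProbabilityMeasure (stepDist p n s) := by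
  induction n with
  | zero => exact Measure.dirac.isProbabilityMeasure
  | succ n ih =>
      haveI := ih
      exact isProb_bind (stepDist p n s) hp hpp

lemma stepDist_succ_front (hp : Measurable p) (n : ℕ) (s : S) :
    stepDist p (n + 1) s = (p s).bind (stepDist p n) := by
  induction n generalizing s with
  | zero =>
      show (stepDist p 0 s).bind p = _
      rw [show stepDist p 0 s = Measure.dirac s from rfl, Measure.dirac_bind hp]
      have : stepDist p 0 = Measure.dirac := rfl
      rw [this, Measure.bind_dirac]
  | succ n ih =>
      show (stepDist p (n + 1) s).bind p = _
      rw [ih s, Measure.bind_bind (stepDist_measurable hp n).aemeasurable hp.aemeasurable]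
      rfl

lemma bind_stepDist_succ (hp : Measurable p) (μ : Measure S) (n : ℕ) :
    μ.bind (stepDist p (n + 1)) = (μ.bind p).bind (stepDist p n) := by
  have h : stepDist p (n + 1) = fun s => (p s).bind (stepDist p n) :=
    funext (stepDist_succ_front hp n)
  rw [h, ← Measure.bind_bind hp.aemeasurable (stepDist_measurable hp n).aemeasurable]

lemma bind_stepDist_inv (hp : Measurable p) {μ : Measure S} (hinv : μ.bind p = μ) (n : ℕ) :
    μ.bind (stepDist p n) = μ := by
  induction n with
  | zero =>
      have : stepDist p 0 = Measure.dirac := rfl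
      rw [this, Measure.bind_dirac]
  | succ n ih => rw [bind_stepDist_succ hp, hinv, ih]

end Step

lemma toReal_le_one (ρ : Measure S) [IsProbabilityMeasure ρ] (B : Set S) :
    (ρ B).toReal ≤ 1 := by
  have : ρ B ≤ 1 := (measure_mono (Set.subset_univ B)).trans_eq (measure_univ)
  simpa using ENNReal.toReal_mono (by simp) this

lemma F_bind_eq (ν : Measure S) [IsFiniteMeasure ν] {κ : S → Measure S} (hκ : Measurable κ)
    (hκp : ∀ s, IsProbabilityMeasure (κ s)) {n : ℕ} {B : Fin n → Set S}
    (hBm : ∀ i, MeasurableSet (B i)) (ε : Fin n → ℝ) :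
    ∑ i, ε i * ((ν.bind κ) (B i)).toReal = ∫ s, ∑ i, ε i * ((κ s) (B i)).toReal ∂ν := by
  have h1 : ∀ i : Fin n, ((ν.bind κ) (B i)).toReal = ∫ s, ((κ s) (B i)).toReal ∂ν := by
    intro i
    rw [Measure.bind_apply (hBm i) hκ.aemeasurable]
    exact (integral_toReal ((Measure.measurable_coe (hBm i)).comp hκ).aemeasurable
      (ae_of_all _ fun s => measure_lt_top (κ s) (B i))).symm
  rw [integral_finset_sum]
  · exact Finset.sum_congr rfl fun i _ => by
      rw [h1 i, ← integral_const_mul]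
  · intro i _
    refine integrable_of_bdd (c := |ε i|) ?_ ?_
    · exact ((Measure.measurable_coe (hBm i)).comp hκ).ennreal_toReal.const_mul _
    · intro s
      haveI := hκp s
      rw [abs_mul]
      calc |ε i| * |((κ s) (B i)).toReal| ≤ |ε i| * 1 := by
            apply mul_le_mul_of_nonneg_left _ (abs_nonneg _)
            rw [abs_of_nonneg ENNReal.toReal_nonneg]
            exact toReal_le_one _ _
        _ = |ε i| := mul_one _

/-- The main estimate: for every `m`,
`tvDist μ1 μ2 ≤ m * ∫ tvDist(p1 s, p2 s) dμ1 + C α^m tvDist μ1 μ2`. -/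
lemma main_est (p1 p2 : S → Measure S)
    (hp1 : ∀ s, IsProbabilityMeasure (p1 s)) (hp2 : ∀ s, IsProbabilityMeasure (p2 s))
    (hm1 : Measurable p1) (hm2 : Measurable p2)
    (μ1 μ2 : Measure S) [IsProbabilityMeasure μ1] [IsProbabilityMeasure μ2]
    (hinv1 : μ1.bind p1 = μ1) (hinv2 : μ2.bind p2 = μ2)
    (C α : ℝ) (hC : 0 < C) (hα : α ∈ Set.Ioo (0 : ℝ) 1)
    (herg2 : ∀ s t, tvDist (stepDist p2 t s) μ2 ≤ C * α ^ t)
    (hmeas : Measurable fun s => tvDist (p1 s) (p2 s)) (m : ℕ) :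
    tvDist μ1 μ2 ≤ m * (∫ s, tvDist (p1 s) (p2 s) ∂μ1) + C * α ^ m * tvDist μ1 μ2 := by
  set D := ∫ s, tvDist (p1 s) (p2 s) ∂μ1 with hD
  -- integrability of the tv distance function
  have htvint : Integrable (fun s => tvDist (p1 s) (p2 s)) μ1 := by
    refine integrable_of_bdd hmeas (c := 2) fun s => ?_
    haveI := hp1 s; haveI := hp2 s
    exact abs_le.2 ⟨by linarith [tvDist_nonneg (p1 s) (p2 s)], tvDist_le_two _ _⟩
  refine csSup_le (tvSet_nonempty μ1 μ2) ?_
  rintro x ⟨n, B, hBm, hBd, hBu, rfl⟩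
  classical
  set ε : Fin n → ℝ := fun i => if (μ2 (B i)).toReal ≤ (μ1 (B i)).toReal then 1 else -1
    with hεdef
  have hε1 : ∀ i, |ε i| = 1 := by
    intro i; rw [hεdef]; dsimp only; split <;> simp
  set F : Measure S → ℝ := fun ρ => ∑ i, ε i * (ρ (B i)).toReal with hFdef
  have hFm : Measurable F := by
    apply Finset.measurable_sum
    intro i _
    exact ((Measure.measurable_coe (hBm i)).ennreal_toReal).const_mul _
  have hFabs : ∀ (ρ : Measure S), IsProbabilityMeasure ρ → |F ρ| ≤ 1 := by
    intro ρ hρ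
    haveI := hρ
    calc |F ρ| ≤ ∑ i, |ε i * (ρ (B i)).toReal| := Finset.abs_sum_le_sum_abs _ _
      _ = ∑ i, (ρ (B i)).toReal := by
          refine Finset.sum_congr rfl fun i _ => ?_
          rw [abs_mul, hε1 i, one_mul, abs_of_nonneg ENNReal.toReal_nonneg]
      _ = 1 := sum_measure_partition ρ hBm hBd hBu
  have hFsub : ∀ (ρ σ : Measure S), IsProbabilityMeasure ρ → IsProbabilityMeasure σ →
      |F ρ - F σ| ≤ tvDist ρ σ := by
    intro ρ σ hρ hσ
    haveI := hρ; haveI := hσ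
    have h1 : F ρ - F σ = ∑ i, ε i * ((ρ (B i)).toReal - (σ (B i)).toReal) := by
      rw [hFdef]; dsimp only
      rw [← Finset.sum_sub_distrib]
      exact Finset.sum_congr rfl fun i _ => by ring
    rw [h1]
    calc |∑ i, ε i * ((ρ (B i)).toReal - (σ (B i)).toReal)|
        ≤ ∑ i, |ε i * ((ρ (B i)).toReal - (σ (B i)).toReal)| := Finset.abs_sum_le_sum_abs _ _
      _ = ∑ i, |(ρ (B i)).toReal - (σ (B i)).toReal| := by
          refine Finset.sum_congr rfl fun i _ => ?_
          rw [abs_mul, hε1 i, one_mul]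
      _ ≤ tvDist ρ σ := le_tvDist ⟨n, B, hBm, hBd, hBu, rfl⟩
  -- the value x equals F μ1 - F μ2
  have hx : ∑ i, |(μ1 (B i)).toReal - (μ2 (B i)).toReal| = F μ1 - F μ2 := by
    rw [hFdef]; dsimp only
    rw [← Finset.sum_sub_distrib]
    refine Finset.sum_congr rfl fun i _ => ?_
    rw [show ε i * (μ1 (B i)).toReal - ε i * (μ2 (B i)).toReal
        = ε i * ((μ1 (B i)).toReal - (μ2 (B i)).toReal) by ring, hεdef]
    dsimp only
    split
    · rw [one_mul, abs_of_nonneg (by linarith)]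
    · rw [neg_one_mul, abs_of_neg (by linarith)]
  rw [hx]
  -- the functions H k
  set H : ℕ → S → ℝ := fun k s => F (stepDist p2 k s) with hHdef
  have hHm : ∀ k, Measurable (H k) := fun k => hFm.comp (stepDist_measurable hm2 k)
  have hHb : ∀ k s, |H k s| ≤ 1 := fun k s => hFabs _ (stepDist_prob hm2 hp2 k s)
  -- G k
  set G : ℕ → ℝ := fun k => F (μ1.bind (stepDist p2 k)) with hGdef
  have hstep0 : stepDist p2 0 = Measure.dirac := rfl
  have hG0 : G 0 = F μ1 := by rw [hGdef]; dsimp only; rw [hstep0, Measure.bind_dirac]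
  -- auxiliary: g functions
  have hFbind : ∀ (k : ℕ) (ν : Measure S), IsProbabilityMeasure ν →
      F (ν.bind (stepDist p2 k)) = ∫ s, H k s ∂ν := by
    intro k ν hν
    haveI := hν
    exact F_bind_eq ν (stepDist_measurable hm2 k) (stepDist_prob hm2 hp2 k) hBm ε
  have hgm : ∀ (k : ℕ) (p : S → Measure S), Measurable p →
      Measurable (fun s => F ((p s).bind (stepDist p2 k))) := by
    intro k p hp
    exact hFm.comp ((Measure.measurable_bind' (stepDist_measurable hm2 k)).comp hp)
  have hgb : ∀ (k : ℕ) (p : S → Measure S) (hp : ∀ s, IsProbabilityMeasure (p s)) (s : S),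
      |F ((p s).bind (stepDist p2 k))| ≤ 1 := by
    intro k p hp s
    haveI := hp s
    exact hFabs _ (isProb_bind _ (stepDist_measurable hm2 k) (stepDist_prob hm2 hp2 k))
  -- expression of G k via one-step decompositions
  have hGk1 : ∀ k, G k = ∫ s, F ((p1 s).bind (stepDist p2 k)) ∂μ1 := by
    intro k
    rw [hGdef]; dsimp only
    conv_lhs => rw [← hinv1, Measure.bind_bind hm1.aemeasurable (stepDist_measurable hm2 k).aemeasurable]
    exact F_bind_eq μ1 ((Measure.measurable_bind' (stepDist_measurable hm2 k)).comp hm1)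
      (fun s => by
        haveI := hp1 s
        exact isProb_bind _ (stepDist_measurable hm2 k) (stepDist_prob hm2 hp2 k)) hBm ε
  have hGk2 : ∀ k, G (k + 1) = ∫ s, F ((p2 s).bind (stepDist p2 k)) ∂μ1 := by
    intro k
    rw [hGdef]; dsimp only
    rw [bind_stepDist_succ hm2, Measure.bind_bind hm2.aemeasurable (stepDist_measurable hm2 k).aemeasurable]
    exact F_bind_eq μ1 ((Measure.measurable_bind' (stepDist_measurable hm2 k)).comp hm2)
      (fun s => by
        haveI := hp2 s
        exact isProb_bind _ (stepDist_measurable hm2 k) (stepDist_prob hm2 hp2 k)) hBm ε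
  -- one-step telescoping bound
  have hGdiff : ∀ k, G k - G (k + 1) ≤ D := by
    intro k
    rw [hGk1 k, hGk2 k, ← integral_sub
      (integrable_of_bdd (hgm k p1 hm1) (hgb k p1 hp1))
      (integrable_of_bdd (hgm k p2 hm2) (hgb k p2 hp2))]
    refine integral_mono (Integrable.sub
      (integrable_of_bdd (hgm k p1 hm1) (hgb k p1 hp1))
      (integrable_of_bdd (hgm k p2 hm2) (hgb k p2 hp2))) htvint fun s => ?_
    haveI := hp1 s; haveI := hp2 s
    have e1 : F ((p1 s).bind (stepDist p2 k)) = ∫ t, H k t ∂(p1 s) :=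
      hFbind k (p1 s) (hp1 s)
    have e2 : F ((p2 s).bind (stepDist p2 k)) = ∫ t, H k t ∂(p2 s) :=
      hFbind k (p2 s) (hp2 s)
    dsimp only
    rw [e1, e2]
    have := integral_sub_le_tvDist (p1 s) (p2 s) (hHm k) (c := 1) zero_le_one (hHb k)
    simpa using this
  -- Term A
  have hTermA : F μ1 - G m ≤ m * D := by
    have htel : ∑ k ∈ Finset.range m, (G k - G (k + 1)) = G 0 - G m :=
      Finset.sum_range_sub' G m
    have : G 0 - G m ≤ ∑ k ∈ Finset.range m, D := by
      rw [← htel]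
      exact Finset.sum_le_sum fun k _ => hGdiff k
    rw [← hG0]
    simpa [Finset.sum_const, nsmul_eq_mul] using this
  -- Term B
  have hTermB : G m - F μ2 ≤ C * α ^ m * tvDist μ1 μ2 := by
    have e1 : G m = ∫ s, H m s ∂μ1 := hFbind m μ1 inferInstance
    have e2 : F μ2 = ∫ s, H m s ∂μ2 := by
      conv_lhs => rw [← bind_stepDist_inv hm2 hinv2 m]
      exact hFbind m μ2 inferInstance
    have hrm : Measurable (fun s => H m s - F μ2) := (hHm m).sub measurable_const
    have hrb : ∀ s, |H m s - F μ2| ≤ C * α ^ m := by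
      intro s
      haveI := stepDist_prob hm2 hp2 m s
      exact (hFsub _ _ (stepDist_prob hm2 hp2 m s) inferInstance).trans (herg2 s m)
    have hc0 : (0 : ℝ) ≤ C * α ^ m := mul_nonneg hC.le (pow_nonneg hα.1.le m)
    have key := integral_sub_le_tvDist μ1 μ2 hrm hc0 hrb
    have hi1 : ∫ s, (H m s - F μ2) ∂μ1 = (∫ s, H m s ∂μ1) - F μ2 := by
      rw [integral_sub (integrable_of_bdd (hHm m) (hHb m)) (integrable_const _),
        integral_const]
      simp
    have hi2 : ∫ s, (H m s - F μ2) ∂μ2 = (∫ s, H m s ∂μ2) - F μ2 := by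
      rw [integral_sub (integrable_of_bdd (hHm m) (hHb m)) (integrable_const _),
        integral_const]
      simp
    rw [hi1, hi2] at key
    rw [e1, e2]
    linarith
  linarith [hTermA, hTermB]

end TVAux

theorem stmt9 {S : Type*} [MeasurableSpace S] (p1 p2 : S → Measure S)
    (hp1 : ∀ s, IsProbabilityMeasure (p1 s)) (hp2 : ∀ s, IsProbabilityMeasure (p2 s))
    (hm1 : Measurable p1) (hm2 : Measurable p2)
    (μ1 μ2 : Measure S) [IsProbabilityMeasure μ1] [IsProbabilityMeasure μ2]
    (hinv1 : μ1.bind p1 = μ1) (hinv2 : μ2.bind p2 = μ2)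
    (C α : ℝ) (hC : 0 < C) (hα : α ∈ Set.Ioo (0 : ℝ) 1)
    (herg2 : ∀ s t, tvDist (stepDist p2 t s) μ2 ≤ C * α ^ t)
    (hmeas : Measurable fun s => tvDist (p1 s) (p2 s)) :
    tvDist μ1 μ2 ≤ ((⌈Real.logb (1 / α) C⌉₊ + 1 : ℕ) : ℝ) / (1 - α) *
        ∫ s, tvDist (p1 s) (p2 s) ∂μ1 ∧
      ∀ c : ℝ, (∀ s, tvDist (p1 s) (p2 s) ≤ c) →
        tvDist μ1 μ2 ≤ ((⌈Real.logb (1 / α) C⌉₊ + 1 : ℕ) : ℝ) / (1 - α) * c := by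
  open TVAux in
  obtain ⟨hα0, hα1⟩ := hα
  set N : ℕ := ⌈Real.logb (1 / α) C⌉₊ with hN
  set m : ℕ := N + 1 with hmdef
  set D : ℝ := ∫ s, tvDist (p1 s) (p2 s) ∂μ1 with hD
  have htvint : Integrable (fun s => tvDist (p1 s) (p2 s)) μ1 := by
    refine TVAux.integrable_of_bdd hmeas (c := 2) fun s => ?_
    haveI := hp1 s; haveI := hp2 s
    exact abs_le.2 ⟨by linarith [TVAux.tvDist_nonneg (p1 s) (p2 s)],
      TVAux.tvDist_le_two _ _⟩
  have hDnn : 0 ≤ D := by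
    refine integral_nonneg fun s => ?_
    haveI := hp1 s; haveI := hp2 s
    exact TVAux.tvDist_nonneg _ _
  -- C * α ^ m ≤ α
  have hb : (1 : ℝ) < 1 / α := one_lt_one_div hα0 hα1
  have hCle : C ≤ (1 / α) ^ (N : ℝ) := by
    rw [← Real.logb_le_iff_le_rpow hb hC]
    exact Nat.le_ceil _
  have hCle' : C ≤ (1 / α) ^ N := by
    rwa [Real.rpow_natCast] at hCle
  have hαN : (0 : ℝ) < α ^ N := pow_pos hα0 N
  have hCαN : C * α ^ N ≤ 1 := by
    have : (1 / α) ^ N = 1 / α ^ N := by rw [div_pow, one_pow]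
    rw [this] at hCle'
    exact (le_div_iff₀ hαN).1 hCle'
  have hKα : C * α ^ m ≤ α := by
    rw [hmdef, pow_succ, ← mul_assoc]
    calc C * α ^ N * α ≤ 1 * α := mul_le_mul_of_nonneg_right hCαN hα0.le
      _ = α := one_mul α
  have hkey := TVAux.main_est p1 p2 hp1 hp2 hm1 hm2 μ1 μ2 hinv1 hinv2 C α hC
    ⟨hα0, hα1⟩ herg2 hmeas m
  have ht0 : 0 ≤ tvDist μ1 μ2 := TVAux.tvDist_nonneg μ1 μ2
  have hmain : tvDist μ1 μ2 ≤ (m : ℝ) / (1 - α) * D := by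
    rw [div_mul_eq_mul_div, le_div_iff₀ (by linarith)]
    nlinarith [mul_nonneg (sub_nonneg.2 hKα) ht0, hkey]
  refine ⟨hmain, fun c hc => ?_⟩
  have hDc : D ≤ c := by
    have := integral_mono htvint (integrable_const c) hc
    simpa using this
  refine hmain.trans (mul_le_mul_of_nonneg_left hDc ?_)
  exact div_nonneg (Nat.cast_nonneg m) (by linarith)
end
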